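/- arXiv:1608.04508 — 2 statements merged into one kernel-verified Lean document; each statement's English description precedes it below -/
import Mathlib

section
/- For 0 < α ≤ π/4, the no-signalling-assisted one-shot zero-error capacity SDP value Υ(N_α) equals 4, i.e., the maximum of tr R_A over R_A, U_{AB} with 0 ≤ U_{AB} ≤ R_A ⊗ I_B, tr_A U_{AB} = I_B, and tr P_α(R_A ⊗ I_B − U_{AB}) = 0 equals 4. -/
open Matrix Kronecker Complex ComplexOrder

noncomputable section

abbrev M3 : Type := Matrix (Fin 3) (Fin 3) ℂ
abbrev M9 : Type := Matrix (Fin 3 × Fin 3) (Fin 3 × Fin 3) ℂ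

/-- |i⟩⟨j| on ℂ³ -/
def ket (i j : Fin 3) : M3 := Matrix.single i j 1

def E (α : ℝ) : M3 := (Real.sin α : ℂ) • ket 0 1 + ket 1 2
def D (α : ℝ) : M3 := (Real.cos α : ℂ) • ket 2 1 + ket 1 0

def u (α : ℝ) : Fin 3 × Fin 3 → ℂ := fun p =>
  (((if p = (1,0) then Real.sin α else 0) + (if p = (2,1) then 1 else 0)) /
    Real.sqrt (1 + Real.sin α ^ 2) : ℝ)

def v (α : ℝ) : Fin 3 × Fin 3 → ℂ := fun p =>
  (((if p = (1,2) then Real.cos α else 0) + (if p = (0,1) then 1 else 0)) /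
    Real.sqrt (1 + Real.cos α ^ 2) : ℝ)

/-- Projection onto span{|u_α⟩, |v_α⟩}, the support of the Choi matrix of N_α. -/
def Pproj (α : ℝ) : M9 :=
  vecMulVec (u α) (star (u α)) + vecMulVec (v α) (star (v α))

/-- Partial trace over the first (A) factor. -/
def trA (M : M9) : M3 := fun i j => ∑ k, M (k, i) (k, j)

/-- Partial trace over the second (B) factor. -/
def trB (M : M9) : M3 := fun i j => ∑ k, M (i, k) (j, k)

/-! ### Auxiliary general lemmas -/

section Aux
variable {n : Type*} [Fintype n]

lemma psd_vm (a : n → ℂ) : (vecMulVec a (star a)).PosSemidef := by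
  refine Matrix.PosSemidef.of_dotProduct_mulVec_nonneg ?_ ?_
  · ext i j
    simp [vecMulVec_apply, conjTranspose_apply, mul_comm]
  · intro x
    have : star x ⬝ᵥ (vecMulVec a (star a)) *ᵥ x = star (star a ⬝ᵥ x) * (star a ⬝ᵥ x) := by
      simp [dotProduct, mulVec, vecMulVec_apply, Finset.mul_sum, Finset.sum_mul, mul_comm,
        mul_assoc, mul_left_comm]
      rw [Finset.sum_comm]
    rw [this]
    exact star_mul_self_nonneg _

lemma trace_vm_mul (a b : n → ℂ) (M : Matrix n n ℂ) :
    (vecMulVec a b * M).trace = b ⬝ᵥ M *ᵥ a := by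
  simp [Matrix.trace, Matrix.mul_apply, vecMulVec_apply, dotProduct, mulVec, diag,
    Finset.mul_sum, mul_comm, mul_left_comm]
  rw [Finset.sum_comm]

lemma trace_mul_diag [DecidableEq n] (M : Matrix n n ℂ) (d : n → ℂ) :
    (M * Matrix.diagonal d).trace = ∑ p, M p p * d p := by
  simp [Matrix.trace, Matrix.diag, Matrix.mul_diagonal]

lemma psd_trace_nonneg {M : Matrix n n ℂ} (h : M.PosSemidef) : 0 ≤ M.trace := by
  classical
  refine Finset.sum_nonneg fun p _ => ?_
  have := h.dotProduct_mulVec_nonneg (Pi.single p 1)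
  simpa [dotProduct, mulVec, Pi.single_apply] using this

lemma trace_mul_psd_nonneg [DecidableEq n] {A B : Matrix n n ℂ}
    (hA : A.PosSemidef) (hB : B.PosSemidef) : 0 ≤ (A * B).trace := by
  obtain ⟨m, v, rfl⟩ := Matrix.posSemidef_iff_eq_sum_vecMulVec.mp hA
  rw [Finset.sum_mul, Matrix.trace_sum]
  exact Finset.sum_nonneg fun i _ => by rw [trace_vm_mul]; exact hB.dotProduct_mulVec_nonneg _

end Aux

/-! ### Concrete vectors and matrices, parameterized by `s = sin α`, `c = cos α` -/

variable (s c : ℝ)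

def xv : Fin 3 × Fin 3 → ℂ := fun p => (if p = (1,0) then 1 else 0) + (if p = (2,1) then (s:ℂ) else 0)
def yv : Fin 3 × Fin 3 → ℂ := fun p => (if p = (1,2) then 1 else 0) + (if p = (0,1) then (c:ℂ) else 0)
def w1 : Fin 3 × Fin 3 → ℂ := fun p => (if p = (1,0) then 1 else 0) - (if p = (2,1) then (s:ℂ) else 0)
def w2 : Fin 3 × Fin 3 → ℂ := fun p => (if p = (1,2) then 1 else 0) - (if p = (0,1) then (c:ℂ) else 0)
def uu : Fin 3 × Fin 3 → ℂ := fun p => (if p = (1,0) then (s:ℂ) else 0) + (if p = (2,1) then 1 else 0)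
def vv : Fin 3 × Fin 3 → ℂ := fun p => (if p = (1,2) then (c:ℂ) else 0) + (if p = (0,1) then 1 else 0)
def z1 : Fin 3 × Fin 3 → ℂ := fun p => (if p = (1,0) then (s:ℂ) else 0) - (if p = (2,1) then 1 else 0)
def z2 : Fin 3 × Fin 3 → ℂ := fun p => (if p = (1,2) then (c:ℂ) else 0) - (if p = (0,1) then 1 else 0)
def Rm : M3 := Matrix.diagonal ![2*(c:ℂ)^2, 2, 2*(s:ℂ)^2]
def Um : M9 := vecMulVec (xv s) (star (xv s)) + vecMulVec (yv c) (star (yv c))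
def dd : Fin 3 × Fin 3 → ℂ := fun p =>
  if p = (0,0) then 2*(c:ℂ)^2 else if p = (0,2) then 2*(c:ℂ)^2 else if p = (1,1) then 2
  else if p = (2,0) then 2*(s:ℂ)^2 else if p = (2,2) then 2*(s:ℂ)^2 else 0
def Td : Fin 3 × Fin 3 → ℂ := fun p => ![2*(s:ℂ)^2, 2, 2*(c:ℂ)^2] p.2
def ee : Fin 3 × Fin 3 → ℂ := fun p =>
  if p = (0,0) then 2*(s:ℂ)^2 else if p = (0,2) then 2*(c:ℂ)^2 else if p = (1,1) then 2
  else if p = (2,0) then 2*(s:ℂ)^2 else if p = (2,2) then 2*(c:ℂ)^2 else 0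
def Jm : M9 := vecMulVec (uu s) (star (uu s)) + vecMulVec (vv c) (star (vv c))

set_option maxHeartbeats 3000000 in
lemma decomp_mem : Rm s c ⊗ₖ (1 : M3) - Um s c =
    vecMulVec (w1 s) (star (w1 s)) + vecMulVec (w2 c) (star (w2 c)) + Matrix.diagonal (dd s c) := by
  ext ⟨i,k⟩ ⟨j,l⟩
  fin_cases i <;> fin_cases k <;> fin_cases j <;> fin_cases l <;>
    simp [Rm, Um, dd, xv, yv, w1, w2, vecMulVec_apply, Matrix.diagonal_apply, Matrix.one_apply,
      Prod.ext_iff, Fin.ext_iff] <;> ring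

set_option maxHeartbeats 3000000 in
lemma decomp_dual : Matrix.diagonal (Td s c) - Jm s c =
    vecMulVec (z1 s) (star (z1 s)) + vecMulVec (z2 c) (star (z2 c)) + Matrix.diagonal (ee s c) := by
  ext ⟨i,k⟩ ⟨j,l⟩
  fin_cases i <;> fin_cases k <;> fin_cases j <;> fin_cases l <;>
    simp [Jm, Td, ee, uu, vv, z1, z2, vecMulVec_apply, Matrix.diagonal_apply,
      Prod.ext_iff, Fin.ext_iff] <;> ring

lemma trA_Um (hsc : s^2 + c^2 = 1) : trA (Um s c) = 1 := by
  have hsc' : (s:ℂ)^2 + (c:ℂ)^2 = 1 := by exact_mod_cast congrArg (Complex.ofReal) hsc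
  ext i j
  fin_cases i <;> fin_cases j <;>
    simp [trA, Um, xv, yv, vecMulVec_apply, Matrix.one_apply, Fin.sum_univ_three,
      Prod.ext_iff] <;>
    linear_combination hsc'

set_option maxHeartbeats 1000000 in
lemma mulvec_mem_u : (Rm s c ⊗ₖ (1 : M3) - Um s c) *ᵥ uu s = 0 := by
  funext p
  fin_cases p <;>
    simp [Rm, Um, xv, yv, uu, mulVec, dotProduct, Fintype.sum_prod_type, Fin.sum_univ_three,
      vecMulVec_apply, Matrix.diagonal_apply, Matrix.one_apply, Prod.ext_iff] <;>
    ring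

set_option maxHeartbeats 1000000 in
lemma mulvec_mem_v : (Rm s c ⊗ₖ (1 : M3) - Um s c) *ᵥ vv c = 0 := by
  funext p
  fin_cases p <;>
    simp [Rm, Um, xv, yv, vv, mulVec, dotProduct, Fintype.sum_prod_type, Fin.sum_univ_three,
      vecMulVec_apply, Matrix.diagonal_apply, Matrix.one_apply, Prod.ext_iff] <;>
    ring

set_option maxHeartbeats 1000000 in
lemma quad_kron_u (R : M3) :
    star (uu s) ⬝ᵥ ((R ⊗ₖ (1 : M3)) *ᵥ uu s) = (s:ℂ)^2 * R 1 1 + R 2 2 := by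
  simp [uu, mulVec, dotProduct, Fintype.sum_prod_type, Fin.sum_univ_three,
    Matrix.one_apply, Prod.ext_iff, mul_comm]
  ring

set_option maxHeartbeats 1000000 in
lemma quad_kron_v (R : M3) :
    star (vv c) ⬝ᵥ ((R ⊗ₖ (1 : M3)) *ᵥ vv c) = (c:ℂ)^2 * R 1 1 + R 0 0 := by
  simp [vv, mulVec, dotProduct, Fintype.sum_prod_type, Fin.sum_univ_three,
    Matrix.one_apply, Prod.ext_iff, mul_comm]
  ring

lemma zero_le_two_sq (r : ℝ) : (0:ℂ) ≤ 2*(r:ℂ)^2 := by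
  have h : ((2*r^2 : ℝ) : ℂ) = 2*(r:ℂ)^2 := by push_cast; ring
  rw [← h]
  exact Complex.zero_le_real.mpr (by positivity)

lemma zero_le_twoC : (0:ℂ) ≤ 2 := by
  rw [show (2:ℂ) = ((2:ℝ):ℂ) by norm_num]
  exact Complex.zero_le_real.mpr (by norm_num)

lemma psd_mem : (Rm s c ⊗ₖ (1 : M3) - Um s c).PosSemidef := by
  rw [decomp_mem]
  refine ((psd_vm _).add (psd_vm _)).add (Matrix.posSemidef_diagonal_iff.2 fun p => ?_)
  fin_cases p <;>
    simp [dd, Prod.ext_iff, Fin.ext_iff] <;>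
    first
      | exact zero_le_two_sq _
      | exact zero_le_twoC
      | exact le_refl 0

lemma psd_dual : (Matrix.diagonal (Td s c) - Jm s c).PosSemidef := by
  rw [decomp_dual]
  refine ((psd_vm _).add (psd_vm _)).add (Matrix.posSemidef_diagonal_iff.2 fun p => ?_)
  fin_cases p <;>
    simp [ee, Prod.ext_iff, Fin.ext_iff] <;>
    first
      | exact zero_le_two_sq _
      | exact zero_le_twoC
      | exact le_refl 0

lemma u_eq (α : ℝ) : u α = (((Real.sqrt (1 + Real.sin α ^ 2))⁻¹ : ℝ) : ℂ) • uu (Real.sin α) := by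
  funext p
  simp only [u, uu, Pi.smul_apply, smul_eq_mul, div_eq_inv_mul]
  push_cast [apply_ite Complex.ofReal]
  ring

lemma v_eq (α : ℝ) : v α = (((Real.sqrt (1 + Real.cos α ^ 2))⁻¹ : ℝ) : ℂ) • vv (Real.cos α) := by
  funext p
  simp only [v, vv, Pi.smul_apply, smul_eq_mul, div_eq_inv_mul]
  push_cast [apply_ite Complex.ofReal]
  ring

lemma uu_eq (α : ℝ) :
    uu (Real.sin α) = ((Real.sqrt (1 + Real.sin α ^ 2) : ℝ) : ℂ) • u α := by
  have hν : (0:ℝ) < Real.sqrt (1 + Real.sin α ^ 2) := Real.sqrt_pos.2 (by positivity)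
  have hν' : ((Real.sqrt (1 + Real.sin α ^ 2) : ℝ) : ℂ) ≠ 0 := by exact_mod_cast hν.ne'
  rw [u_eq, smul_smul, ← Complex.ofReal_mul, mul_inv_cancel₀ hν.ne', Complex.ofReal_one, one_smul]

lemma vv_eq (α : ℝ) :
    vv (Real.cos α) = ((Real.sqrt (1 + Real.cos α ^ 2) : ℝ) : ℂ) • v α := by
  have hν : (0:ℝ) < Real.sqrt (1 + Real.cos α ^ 2) := Real.sqrt_pos.2 (by positivity)
  rw [v_eq, smul_smul, ← Complex.ofReal_mul, mul_inv_cancel₀ hν.ne', Complex.ofReal_one, one_smul]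

/-- The one-shot NS-assisted zero-error capacity SDP value Υ(N_α) equals 4. -/
theorem ns_capacity_eq_four (α : ℝ) (hα : 0 < α) (hα' : α ≤ Real.pi / 4) :
    IsGreatest {x : ℝ | ∃ (R : M3) (U : M9),
      U.PosSemidef ∧ (R ⊗ₖ (1 : M3) - U).PosSemidef ∧ trA U = 1 ∧
      (Pproj α * (R ⊗ₖ (1 : M3) - U)).trace = 0 ∧ x = (R.trace).re} 4 := by
  have hsc : Real.sin α ^ 2 + Real.cos α ^ 2 = 1 := Real.sin_sq_add_cos_sq α
  set s := Real.sin α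
  set c := Real.cos α
  have hsc' : (s:ℂ)^2 + (c:ℂ)^2 = 1 := by exact_mod_cast congrArg (Complex.ofReal) hsc
  constructor
  · -- membership
    refine ⟨Rm s c, Um s c, (psd_vm _).add (psd_vm _), psd_mem s c, trA_Um s c hsc, ?_, ?_⟩
    · have hu0 : (Rm s c ⊗ₖ (1 : M3) - Um s c) *ᵥ u α = 0 := by
        rw [u_eq, mulVec_smul, mulvec_mem_u, smul_zero]
      have hv0 : (Rm s c ⊗ₖ (1 : M3) - Um s c) *ᵥ v α = 0 := by
        rw [v_eq, mulVec_smul, mulvec_mem_v, smul_zero]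
      rw [Pproj, add_mul, trace_add, trace_vm_mul, trace_vm_mul, hu0, hv0]
      simp
    · have : (Rm s c).trace = 4 := by
        simp [Rm, Matrix.trace_fin_three, Matrix.diagonal_apply, Fin.sum_univ_three]
        linear_combination (2:ℂ) * hsc'
      rw [this]
      simp
  · -- upper bound
    rintro x ⟨R, U, hU, hD, htrA, hP, rfl⟩
    set Δ : M9 := R ⊗ₖ (1 : M3) - U with hΔdef
    -- the two quadratic forms vanish
    rw [Pproj, add_mul, trace_add, trace_vm_mul, trace_vm_mul] at hP
    have h_u0 : star (u α) ⬝ᵥ Δ *ᵥ u α = 0 :=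
      le_antisymm (by
        have hv := hD.dotProduct_mulVec_nonneg (v α)
        calc star (u α) ⬝ᵥ Δ *ᵥ u α
            ≤ star (u α) ⬝ᵥ Δ *ᵥ u α + star (v α) ⬝ᵥ Δ *ᵥ v α := le_add_of_nonneg_right hv
          _ = 0 := hP) (hD.dotProduct_mulVec_nonneg (u α))
    have h_v0 : star (v α) ⬝ᵥ Δ *ᵥ v α = 0 :=
      le_antisymm (by
        have hu := hD.dotProduct_mulVec_nonneg (u α)
        calc star (v α) ⬝ᵥ Δ *ᵥ v α
            ≤ star (u α) ⬝ᵥ Δ *ᵥ u α + star (v α) ⬝ᵥ Δ *ᵥ v α := le_add_of_nonneg_left hu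
          _ = 0 := hP) (hD.dotProduct_mulVec_nonneg (v α))
    have hJΔ : (Jm s c * Δ).trace = 0 := by
      rw [Jm, add_mul, trace_add, trace_vm_mul, trace_vm_mul, uu_eq, vv_eq]
      simp [star_smul, smul_dotProduct, dotProduct_smul, mulVec_smul, h_u0, h_v0]
    have hJR : (Jm s c * (R ⊗ₖ (1 : M3))).trace = R.trace := by
      rw [Jm, add_mul, trace_add, trace_vm_mul, trace_vm_mul, quad_kron_u, quad_kron_v,
        Matrix.trace_fin_three]
      linear_combination (R 1 1) * hsc'
    have hJU : (Jm s c * U).trace = R.trace := by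
      have h := congrArg Matrix.trace (mul_sub (Jm s c) (R ⊗ₖ (1 : M3)) U)
      rw [← hΔdef, trace_sub, hJΔ, hJR] at h
      linear_combination h
    have hk : ∀ k : Fin 3, (∑ i, U (i,k) (i,k)) = 1 := fun k => by
      have h := congrFun (congrFun htrA k) k
      simpa [trA, Matrix.one_apply] using h
    have hTU : (Matrix.diagonal (Td s c) * U).trace = 4 := by
      rw [Matrix.trace_mul_comm, trace_mul_diag, Fintype.sum_prod_type, Finset.sum_comm]
      simp only [Td]
      simp_rw [← Finset.sum_mul]
      rw [Fin.sum_univ_three, hk 0, hk 1, hk 2]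
      simp
      linear_combination (2:ℂ) * hsc'
    have hW : 0 ≤ ((Matrix.diagonal (Td s c) - Jm s c) * U).trace :=
      trace_mul_psd_nonneg (psd_dual s c) hU
    have hfin : ((Matrix.diagonal (Td s c) - Jm s c) * U).trace = 4 - R.trace := by
      rw [sub_mul, trace_sub, hTU, hJU]
    rw [hfin] at hW
    have := (Complex.le_def.mp hW).1
    simp at this
    linarith
end
end

section
/- For 0 < α ≤ π/4, the quantum Lovász number of the channel N_α satisfies ϑ̃(N_α) = 2 + cos²α + sec²α > 4: the primal solution (ρ, T) with ρ = (cos²α|0⟩⟨0| + |1⟩⟨1|)/(1+cos²α) and T = T₁⊗T₂ + |00⟩⟨11| + |11⟩⟨00| gives lower bound 2 + cos²α + sec²α, and the dual solution Y gives matching upper bound ‖tr_A Y‖_∞ = 2 + cos²α + sec²α. -/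
open Matrix Kronecker Complex ComplexOrder

noncomputable section

def Phi : Fin 3 × Fin 3 → ℂ := fun p => if p.1 = p.2 then 1 else 0

def F1 (α : ℝ) : M3 := ket 0 0 + (Real.cos α ^ 2 : ℂ) • ket 1 1
def F2 (α : ℝ) : M3 := (Real.sin α ^ 2 : ℂ) • ket 1 1 + ket 2 2
def F3 : M3 := ket 0 2
def F4 : M3 := ket 2 0

/-- The non-commutative graph S_α of N_α. -/
def Sgraph (α : ℝ) : Submodule ℂ M3 := Submodule.span ℂ ({F1 α, F2 α, F3, F4} : Set M3)

/-! ### Auxiliary general lemmas -/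

lemma psd_vecMulVec {n : Type*} [Fintype n] (v : n → ℂ) :
    (vecMulVec v (star v)).PosSemidef := by
  exact posSemidef_vecMulVec_self_star v

lemma psd_real_smul_vecMulVec {n : Type*} [Fintype n] {r : ℝ} (hr : 0 ≤ r) (v : n → ℂ) :
    (((r : ℂ)) • vecMulVec v (star v)).PosSemidef := by
  have hs : ((Real.sqrt r : ℂ)) * (Real.sqrt r : ℂ) = (r : ℂ) := by
    rw [← Complex.ofReal_mul, Real.mul_self_sqrt hr]
  have h : ((r : ℂ)) • vecMulVec v (star v)
      = vecMulVec (((Real.sqrt r : ℂ)) • v) (star (((Real.sqrt r : ℂ)) • v)) := by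
    ext i j
    simp only [Matrix.smul_apply, vecMulVec_apply, Pi.smul_apply, smul_eq_mul, Pi.star_apply,
      star_mul', Complex.star_def, Complex.conj_ofReal]
    rw [show ((r : ℂ)) = (Real.sqrt r : ℂ) * (Real.sqrt r : ℂ) from hs.symm]
    ring
  rw [h]
  exact psd_vecMulVec _

lemma psd_trace_nonneg_s19 {n : Type*} [Fintype n] [DecidableEq n] {A : Matrix n n ℂ}
    (hA : A.PosSemidef) : 0 ≤ A.trace := by
  refine Finset.sum_nonneg fun i _ => ?_
  have := hA.dotProduct_mulVec_nonneg (Pi.single i 1)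
  simpa [dotProduct, Pi.single_apply] using this

lemma psd_trace_mul_nonneg {n : Type*} [Fintype n] [DecidableEq n] {A B : Matrix n n ℂ}
    (hA : A.PosSemidef) (hB : B.PosSemidef) : 0 ≤ (A * B).trace := by
  obtain ⟨C, rfl⟩ : ∃ C : Matrix n n ℂ, B = Cᴴ * C := by
    open scoped MatrixOrder in exact CStarAlgebra.nonneg_iff_eq_star_mul_self.mp hB.nonneg
  rw [← Matrix.mul_assoc, trace_mul_comm, ← Matrix.mul_assoc]
  exact psd_trace_nonneg_s19 (hA.mul_mul_conjTranspose_same C)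

lemma dot_eq_trace {n : Type*} [Fintype n] (M : Matrix n n ℂ) (y : n → ℂ) :
    star y ⬝ᵥ M *ᵥ y = (M * vecMulVec y (star y)).trace := by
  simp only [dotProduct, mulVec, trace, diag, mul_apply, vecMulVec_apply, Pi.star_apply,
    Finset.mul_sum]
  refine Finset.sum_congr rfl fun i _ => Finset.sum_congr rfl fun j _ => by ring

/-! ### The primal optimal solution -/

def rho0 (c : ℝ) : M3 := Matrix.diagonal fun i =>
  if i = 0 then ((c/(1+c) : ℝ) : ℂ) else if i = 1 then ((1/(1+c) : ℝ) : ℂ) else 0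
def T1m (c : ℝ) : M3 := Matrix.diagonal fun i =>
  if i = 0 then ((1/(1+c) : ℝ) : ℂ) else if i = 1 then ((-(1/(c*(1+c))) : ℝ) : ℂ)
  else (((1-c)/(c*(1+c)) : ℝ) : ℂ)
def T2m (c : ℝ) : M3 := Matrix.diagonal fun i =>
  if i = 0 then ((c^2 : ℝ) : ℂ) else if i = 1 then -1 else 0
def T0 (c : ℝ) : M9 := T1m c ⊗ₖ T2m c + ket 0 1 ⊗ₖ ket 0 1 + ket 1 0 ⊗ₖ ket 1 0
def w0 (c : ℝ) : Fin 3 × Fin 3 → ℂ := fun p =>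
  if p = (0,0) then ((c : ℝ) : ℂ) else if p = (1,1) then 1 else 0
def dg0 (c : ℝ) : Fin 3 × Fin 3 → ℂ := fun p =>
  if p = (2,0) then ((c*(2-c)/(1+c) : ℝ) : ℂ)
  else if p = (2,1) then (((2*c-1)/(c*(1+c)) : ℝ) : ℂ) else 0

set_option maxHeartbeats 2000000 in
lemma Z0_decomp (c : ℝ) (hc : 0 < c) :
    (1 : M3) ⊗ₖ rho0 c + T0 c
      = ((c⁻¹ : ℝ) : ℂ) • vecMulVec (w0 c) (star (w0 c)) + Matrix.diagonal (dg0 c) := by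
  have h1 : (c : ℂ) ≠ 0 := by exact_mod_cast hc.ne'
  have h2 : (1 + (c : ℂ)) ≠ 0 := by
    exact_mod_cast (by positivity : (0:ℝ) < 1 + c).ne'
  ext ⟨a, b⟩ ⟨a2, b2⟩
  fin_cases a <;> fin_cases b <;> fin_cases a2 <;> fin_cases b2 <;>
    (try simp [rho0, T0, T1m, T2m, w0, dg0, ket, Matrix.single, Matrix.diagonal_apply,
      Matrix.kroneckerMap_apply, Matrix.vecMulVec_apply, Matrix.one_apply, Prod.mk.injEq,
      -Prod.mk_zero_zero, -Prod.mk_one_one]) <;>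
    push_cast <;> (try field_simp) <;> (try ring) <;> (try simp)

/-! ### The dual optimal solution -/

def Y1m (c : ℝ) : M3 := Matrix.diagonal fun i =>
  if i = 0 then (((1+c)/c : ℝ) : ℂ) else if i = 1 then ((1+c : ℝ) : ℂ) else 0
def Y2m (c : ℝ) : M3 := Matrix.diagonal fun i =>
  if i = 0 then (((2*c-1)/c : ℝ) : ℂ) else if i = 1 then (((c^2-c+1)/c : ℝ) : ℂ)
  else (((1+c)/c : ℝ) : ℂ)
def Ymat (c : ℝ) : M9 :=
  Y1m c ⊗ₖ (ket 0 0 + ket 1 1) + Y2m c ⊗ₖ ket 2 2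
    + (((1+c)/c : ℝ) : ℂ) • (ket 0 2 ⊗ₖ ket 0 2 + ket 2 0 ⊗ₖ ket 2 0)
def v0 (c : ℝ) : Fin 3 × Fin 3 → ℂ :=
  fun p => if p = (0,0) then 1 else if p = (1,1) then -((c : ℝ) : ℂ)
  else if p = (2,2) then 1 else 0
def dgY (c : ℝ) : Fin 3 × Fin 3 → ℂ := fun p =>
  if p = (0,1) then (((1+c)/c : ℝ) : ℂ)
  else if p = (1,0) then ((1+c : ℝ) : ℂ)
  else if p = (0,2) then (((2*c-1)/c : ℝ) : ℂ)
  else if p = (1,2) then (((c^2-c+1)/c : ℝ) : ℂ) else 0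

set_option maxHeartbeats 2000000 in
lemma Y_decomp (c : ℝ) (hc : 0 < c) :
    Ymat c = vecMulVec Phi (star Phi) + ((c⁻¹ : ℝ) : ℂ) • vecMulVec (v0 c) (star (v0 c))
      + Matrix.diagonal (dgY c) := by
  have h1 : (c : ℂ) ≠ 0 := by exact_mod_cast hc.ne'
  ext ⟨a, b⟩ ⟨a2, b2⟩
  fin_cases a <;> fin_cases b <;> fin_cases a2 <;> fin_cases b2 <;>
    (try simp [Ymat, Y1m, Y2m, v0, dgY, Phi, ket, Matrix.single, Matrix.diagonal_apply,
      Matrix.kroneckerMap_apply, Matrix.vecMulVec_apply, Matrix.one_apply, Prod.mk.injEq,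
      -Prod.mk_zero_zero, -Prod.mk_one_one]) <;>
    push_cast <;> (try field_simp) <;> (try ring) <;> (try simp)

/-! ### Orthogonality to the graph -/

lemma orth_of_gen (α : ℝ) (F : M3)
    (h1 : ((F1 α)ᴴ * F).trace = 0) (h2 : ((F2 α)ᴴ * F).trace = 0)
    (h3 : (F3ᴴ * F).trace = 0) (h4 : (F4ᴴ * F).trace = 0) :
    ∀ G ∈ Sgraph α, (Gᴴ * F).trace = 0 := by
  intro G hG
  induction hG using Submodule.span_induction with
  | mem x h =>
    simp only [Set.mem_insert_iff, Set.mem_singleton_iff] at h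
    rcases h with rfl | rfl | rfl | rfl
    exacts [h1, h2, h3, h4]
  | zero => simp
  | add x y hx hy px py => simp [conjTranspose_add, add_mul, trace_add, px, py]
  | smul a x hx px => simp [conjTranspose_smul, Matrix.smul_mul, trace_smul, px]

lemma orth_T1 (α : ℝ) (hc : Real.cos α ≠ 0) :
    ∀ G ∈ Sgraph α, (Gᴴ * T1m (Real.cos α ^ 2)).trace = 0 := by
  set c := Real.cos α ^ 2 with hcdef
  have hcr : c ≠ 0 := pow_ne_zero 2 hc
  have h1 : (c : ℂ) ≠ 0 := by exact_mod_cast hcr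
  have h2 : (1 : ℂ) + (c : ℂ) ≠ 0 := by
    have : (0:ℝ) < 1 + c := by positivity
    exact_mod_cast this.ne'
  have hsin : Real.sin α ^ 2 = 1 - c := Real.sin_sq α
  have e1 : ((Real.cos α : ℂ))^2 = (c : ℂ) := by rw [hcdef]; norm_cast
  have e2 : ((Real.sin α : ℂ))^2 = 1 - (c : ℂ) := by
    have := Real.sin_sq α
    rw [← hcdef] at this
    exact_mod_cast congrArg Complex.ofReal this
  clear_value c
  refine orth_of_gen α _ ?_ ?_ ?_ ?_ <;>
    simp only [F1, F2, F3, F4, T1m, hsin, ket, Matrix.single, Matrix.trace_fin_three,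
      Matrix.mul_apply, Fin.sum_univ_three, Matrix.conjTranspose_apply, Matrix.diagonal_apply,
      Matrix.add_apply, Matrix.smul_apply, Matrix.of_apply, smul_eq_mul, map_add, _root_.map_mul,
      _root_.map_one, _root_.map_zero, Complex.conj_ofReal, star_zero, star_one] <;>
    simp [-Complex.ofReal_cos, -Complex.ofReal_sin, Complex.conj_ofReal, e1, e2] <;>
    field_simp <;> ring

lemma orth_ket01 (α : ℝ) : ∀ G ∈ Sgraph α, (Gᴴ * ket 0 1).trace = 0 := by
  refine orth_of_gen α _ ?_ ?_ ?_ ?_ <;>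
    simp [F1, F2, F3, F4, ket, Matrix.single, Matrix.trace_fin_three,
      Matrix.mul_apply, Fin.sum_univ_three, Matrix.conjTranspose_apply]

lemma orth_ket10 (α : ℝ) : ∀ G ∈ Sgraph α, (Gᴴ * ket 1 0).trace = 0 := by
  refine orth_of_gen α _ ?_ ?_ ?_ ?_ <;>
    simp [F1, F2, F3, F4, ket, Matrix.single, Matrix.trace_fin_three,
      Matrix.mul_apply, Fin.sum_univ_three, Matrix.conjTranspose_apply]

/-! ### Membership of the dual pieces in the graph -/

lemma ket02_ct : (ket 0 2)ᴴ = F4 := by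
  ext i j; fin_cases i <;> fin_cases j <;> simp [ket, F4, Matrix.single]
lemma ket20_ct : (ket 2 0)ᴴ = F3 := by
  ext i j; fin_cases i <;> fin_cases j <;> simp [ket, F3, Matrix.single]

lemma Y1_ct (α : ℝ) (hc : Real.cos α ≠ 0) :
    (Y1m (Real.cos α ^ 2))ᴴ
      = (((1 + Real.cos α ^ 2)/(Real.cos α ^ 2) : ℝ) : ℂ) • F1 α := by
  have hcr : Real.cos α ^ 2 ≠ 0 := pow_ne_zero 2 hc
  ext i j
  fin_cases i <;> fin_cases j <;>
    simp [Y1m, F1, ket, Matrix.single, Matrix.diagonal_apply, Complex.conj_ofReal,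
      -Complex.ofReal_cos] <;>
    (try rw [show ((Real.cos α : ℂ))^2 = ((Real.cos α ^ 2 : ℝ) : ℂ) by push_cast; ring]) <;>
    (try rw [← Complex.ofReal_mul]) <;> (try norm_cast) <;> field_simp

lemma Y2_ct (α : ℝ) (hc : Real.cos α ≠ 0) :
    (Y2m (Real.cos α ^ 2))ᴴ
      = (((2*Real.cos α ^ 2 - 1)/(Real.cos α ^ 2) : ℝ) : ℂ) • F1 α
        + (((1 + Real.cos α ^ 2)/(Real.cos α ^ 2) : ℝ) : ℂ) • F2 α := by
  have hcr : Real.cos α ^ 2 ≠ 0 := pow_ne_zero 2 hc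
  have hsin : Real.sin α ^ 2 = 1 - Real.cos α ^ 2 := Real.sin_sq α
  ext i j
  fin_cases i <;> fin_cases j <;>
    simp [Y2m, F1, F2, hsin, ket, Matrix.single, Matrix.diagonal_apply,
      Complex.conj_ofReal, -Complex.ofReal_cos, -Complex.ofReal_sin] <;>
    (try rw [show ((Real.cos α : ℂ))^2 = ((Real.cos α ^ 2 : ℝ) : ℂ) by push_cast; ring]) <;>
    (try norm_cast) <;> field_simp <;> (try ring) <;>
    (norm_cast; field_simp; push_cast; linear_combination (-(Real.cos α^2) - 1) * hsin)

/-! ### Trace computations for the dual -/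

lemma ket_sum_eq_one : ket 0 0 + ket 1 1 + ket 2 2 = (1 : M3) := by
  ext i j
  fin_cases i <;> fin_cases j <;> simp [ket, Matrix.single, Matrix.one_apply]

lemma trace_Y1 (c : ℝ) (hc : c ≠ 0) : (Y1m c).trace = (((1+c)^2/c : ℝ) : ℂ) := by
  simp [Y1m, Matrix.trace_fin_three, Fin.sum_univ_three, Matrix.diagonal_apply]
  push_cast
  field_simp

lemma trace_Y2 (c : ℝ) (hc : c ≠ 0) : (Y2m c).trace = (((1+c)^2/c : ℝ) : ℂ) := by
  simp [Y2m, Matrix.trace_fin_three, Fin.sum_univ_three, Matrix.diagonal_apply]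
  push_cast
  field_simp
  ring

lemma trace_ket02 : (ket 0 2).trace = 0 := by
  simp [ket, Matrix.trace_fin_three, Matrix.single]
lemma trace_ket20 : (ket 2 0).trace = 0 := by
  simp [ket, Matrix.trace_fin_three, Matrix.single]

lemma trace_T_Ymat (α : ℝ) (hc : Real.cos α ≠ 0) (T : M9)
    (hT : T ∈ Submodule.span ℂ
      {X : M9 | ∃ F M, (∀ G ∈ Sgraph α, (Gᴴ * F).trace = 0) ∧ X = F ⊗ₖ M}) :
    (T * Ymat (Real.cos α ^ 2)).trace = 0 := by
  induction hT using Submodule.span_induction with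
  | mem X h =>
    obtain ⟨F, M, hF, rfl⟩ := h
    have key : ∀ G : M3, Gᴴ ∈ Sgraph α → (F * G).trace = 0 := by
      intro G hG
      have := hF _ hG
      rw [conjTranspose_conjTranspose] at this
      rw [trace_mul_comm]
      exact this
    have m1 : (Y1m (Real.cos α ^ 2))ᴴ ∈ Sgraph α := by
      rw [Y1_ct α hc]
      exact Submodule.smul_mem _ _ (Submodule.subset_span (by simp))
    have m2 : (Y2m (Real.cos α ^ 2))ᴴ ∈ Sgraph α := by
      rw [Y2_ct α hc]
      refine Submodule.add_mem _ (Submodule.smul_mem _ _ (Submodule.subset_span (by simp)))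
        (Submodule.smul_mem _ _ (Submodule.subset_span (by simp)))
    have m3 : (ket 0 2)ᴴ ∈ Sgraph α := by
      rw [ket02_ct]; exact Submodule.subset_span (by simp)
    have m4 : (ket 2 0)ᴴ ∈ Sgraph α := by
      rw [ket20_ct]; exact Submodule.subset_span (by simp)
    have k1 : (F * Y1m (Real.cos α ^ 2)).trace = 0 := key _ m1
    have k2 : (F * Y2m (Real.cos α ^ 2)).trace = 0 := key _ m2
    have k3 : (F * ket 0 2).trace = 0 := key _ m3
    have k4 : (F * ket 2 0).trace = 0 := key _ m4
    simp [Ymat, mul_add, Matrix.mul_smul, ← Matrix.mul_kronecker_mul, trace_add, trace_smul,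
      Matrix.trace_kronecker, k1, k2, k3, k4]
  | zero => simp
  | add x y hx hy px py => simp [add_mul, trace_add, px, py]
  | smul a x hx px => simp [Matrix.smul_mul, trace_smul, px]

lemma trace_rho_Ymat (α : ℝ) (hc : Real.cos α ≠ 0) (ρ : M3) (hρtr : ρ.trace = 1) :
    (((1 : M3) ⊗ₖ ρ) * Ymat (Real.cos α ^ 2)).trace
      = (((1 + Real.cos α ^ 2)^2/(Real.cos α ^ 2) : ℝ) : ℂ) := by
  set c := Real.cos α ^ 2 with hcdef
  have hcr : c ≠ 0 := pow_ne_zero 2 hc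
  have expand : ((1 : M3) ⊗ₖ ρ) * Ymat c
      = Y1m c ⊗ₖ (ρ * (ket 0 0 + ket 1 1)) + Y2m c ⊗ₖ (ρ * ket 2 2)
        + (((1+c)/c : ℝ) : ℂ) • (ket 0 2 ⊗ₖ (ρ * ket 0 2) + ket 2 0 ⊗ₖ (ρ * ket 2 0)) := by
    simp [Ymat, mul_add, Matrix.mul_smul, ← Matrix.mul_kronecker_mul, Matrix.one_mul]
  rw [expand]
  simp only [trace_add, trace_smul, Matrix.trace_kronecker, trace_Y1 c hcr, trace_Y2 c hcr,
    trace_ket02, trace_ket20, zero_mul, add_zero, smul_zero, mul_zero]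
  have : (ρ * (ket 0 0 + ket 1 1)).trace + (ρ * ket 2 2).trace = 1 := by
    rw [← trace_add, ← mul_add, show ket 0 0 + ket 1 1 + ket 2 2 = (1:M3) from ket_sum_eq_one,
      mul_one, hρtr]
  rw [mul_comm, mul_comm (((1+c)^2/c : ℝ) : ℂ) _, ← add_mul, this, one_mul]

/-- ϑ̃(N_α) = 2 + cos²α + sec²α > 4: the quantum Lovász number SDP of N_α attains
its maximum at 2 + cos²α + sec²α, which is strictly greater than 4. -/
theorem quantum_lovasz_number (α : ℝ) (hα : 0 < α) (hα' : α ≤ Real.pi / 4) :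
    IsGreatest {x : ℝ | ∃ (ρ : M3) (T : M9), ρ.PosSemidef ∧ ρ.trace = 1 ∧
        T ∈ Submodule.span ℂ
          {X : M9 | ∃ F M, (∀ G ∈ Sgraph α, (Gᴴ * F).trace = 0) ∧ X = F ⊗ₖ M} ∧
        ((1 : M3) ⊗ₖ ρ + T).PosSemidef ∧
        x = (star Phi ⬝ᵥ (((1 : M3) ⊗ₖ ρ + T) *ᵥ Phi)).re}
      (2 + Real.cos α ^ 2 + 1 / Real.cos α ^ 2) ∧
    2 + Real.cos α ^ 2 + 1 / Real.cos α ^ 2 > 4 := by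
  have hπ := Real.pi_pos
  have hcos_pos : 0 < Real.cos α := by
    apply Real.cos_pos_of_mem_Ioo
    constructor <;> [linarith; linarith]
  have hcos_ne : Real.cos α ≠ 0 := hcos_pos.ne'
  have hcos_lt : Real.cos α < 1 := by
    calc Real.cos α < Real.cos 0 := by
          apply Real.cos_lt_cos_of_nonneg_of_le_pi le_rfl (by linarith) hα
      _ = 1 := Real.cos_zero
  have hcos_ge : Real.sqrt 2 / 2 ≤ Real.cos α := by
    rw [← Real.cos_pi_div_four]
    exact Real.cos_le_cos_of_nonneg_of_le_pi hα.le (by linarith) hα'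
  set c : ℝ := Real.cos α ^ 2 with hcdef
  have hc0 : 0 < c := by positivity
  have hc1 : c < 1 := by nlinarith
  have hchalf : 1/2 ≤ c := by
    have h2 : Real.sqrt 2 ^ 2 = 2 := Real.sq_sqrt (by norm_num)
    nlinarith [hcos_ge, Real.sqrt_nonneg 2, hcos_pos]
  have hcC : (c : ℂ) ≠ 0 := by exact_mod_cast hc0.ne'
  have hval_id : (1+c)^2/c = 2 + c + 1/c := by field_simp; ring
  constructor
  · constructor
    · -- membership: the primal optimal solution
      refine ⟨rho0 c, T0 c, ?_, ?_, ?_, ?_, ?_⟩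
      · -- rho0 PSD
        refine Matrix.PosSemidef.diagonal fun i => ?_
        fin_cases i <;> simp <;> norm_cast <;> positivity
      · -- trace rho0 = 1
        have h2C : (1 + (c : ℂ)) ≠ 0 := by
          exact_mod_cast (by positivity : (0:ℝ) < 1 + c).ne'
        simp [rho0, Matrix.trace_fin_three, Fin.sum_univ_three, Matrix.diagonal_apply]
        field_simp
        ring
      · -- T0 in the span
        refine Submodule.add_mem _ (Submodule.add_mem _ ?_ ?_) ?_
        · exact Submodule.subset_span ⟨T1m c, T2m c, orth_T1 α hcos_ne, rfl⟩
        · exact Submodule.subset_span ⟨ket 0 1, ket 0 1, orth_ket01 α, rfl⟩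
        · exact Submodule.subset_span ⟨ket 1 0, ket 1 0, orth_ket10 α, rfl⟩
      · -- Z0 PSD
        rw [Z0_decomp c hc0]
        refine (psd_real_smul_vecMulVec (by positivity) _).add
          (Matrix.PosSemidef.diagonal fun p => ?_)
        simp only [dg0]
        split_ifs
        · exact Complex.zero_le_real.mpr
            (div_nonneg (mul_nonneg hc0.le (by linarith)) (by linarith))
        · refine Complex.zero_le_real.mpr
            (div_nonneg (by linarith) (by positivity))
        · exact le_refl 0
      · -- value
        rw [Z0_decomp c hc0]
        have hval : star Phi ⬝ᵥ ((((c⁻¹ : ℝ) : ℂ) • vecMulVec (w0 c) (star (w0 c))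
            + Matrix.diagonal (dg0 c)) *ᵥ Phi) = ((2 + c + 1/c : ℝ) : ℂ) := by
          simp [dotProduct, mulVec, Fintype.sum_prod_type, Fin.sum_univ_three, Phi, w0, dg0,
            Matrix.vecMulVec_apply, Matrix.diagonal_apply, Matrix.add_apply, Matrix.smul_apply,
            Prod.mk.injEq, -Prod.mk_zero_zero, -Prod.mk_one_one]
          push_cast
          field_simp
          ring
        rw [hval, Complex.ofReal_re]
    · -- upper bound
      rintro x ⟨ρ, T, hρ, hρtr, hT, hZ, rfl⟩
      set Z : M9 := (1 : M3) ⊗ₖ ρ + T with hZdef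
      set Pm : M9 := vecMulVec Phi (star Phi) with hPmdef
      have hdgY : ∀ p, (0 : ℂ) ≤ dgY c p := by
        intro p
        simp only [dgY]
        split_ifs
        · exact Complex.zero_le_real.mpr (by positivity)
        · exact Complex.zero_le_real.mpr (by positivity)
        · exact Complex.zero_le_real.mpr (div_nonneg (by linarith) hc0.le)
        · refine Complex.zero_le_real.mpr (div_nonneg (by nlinarith) hc0.le)
        · exact le_refl 0
      have hR : (Ymat c - Pm).PosSemidef := by
        have hRe : Ymat c - Pm
            = ((c⁻¹ : ℝ) : ℂ) • vecMulVec (v0 c) (star (v0 c)) + Matrix.diagonal (dgY c) := by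
          rw [Y_decomp c hc0, hPmdef]
          abel
        rw [hRe]
        exact (psd_real_smul_vecMulVec (by positivity) _).add
          (Matrix.PosSemidef.diagonal hdgY)
      have hTY : (Z * Ymat c).trace = (((1+c)^2/c : ℝ) : ℂ) := by
        rw [hZdef, add_mul, trace_add, trace_rho_Ymat α hcos_ne ρ hρtr,
          trace_T_Ymat α hcos_ne T hT, add_zero]
      have htr_nonneg : (0 : ℂ) ≤ (Z * (Ymat c - Pm)).trace := psd_trace_mul_nonneg hZ hR
      have hsplit : (Z * Pm).trace = (Z * Ymat c).trace - (Z * (Ymat c - Pm)).trace := by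
        rw [Matrix.mul_sub, trace_sub]
        ring
      have hdot : star Phi ⬝ᵥ Z *ᵥ Phi = (Z * Pm).trace := dot_eq_trace Z Phi
      rw [hdot, hsplit, hTY]
      have hre : (0:ℝ) ≤ ((Z * (Ymat c - Pm)).trace).re := by
        have := (Complex.le_def.mp htr_nonneg).1
        simpa using this
      rw [Complex.sub_re, Complex.ofReal_re]
      have : (1+c)^2/c = 2 + c + 1/c := hval_id
      linarith
  · -- strict inequality
    have h1c : 0 < 1 - c := by linarith
    have hgt : 0 < (1-c)^2/c := div_pos (pow_pos h1c 2) hc0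
    have hiden : c + 1/c - 2 = (1-c)^2/c := by field_simp; ring
    linarith
end
end
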